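/- Let τ: 𝕋¹ → ℝ³ be a continuous unit tangent field (|τ| ≡ 1) with induced unit-speed curve γ_τ, and let A_τ := Id - (1/2π)∫_{𝕋¹} τ⊗τ dx. Then the minimal eigenvalue of A_τ satisfies λ_min(A_τ) ≥ δ_∞(γ_τ)^{-2}/2, and consequently ‖A_τ^{-1}‖_op ≤ 2δ_∞(γ_τ)². -/

import Mathlib

open MeasureTheory Real

/-- Geodesic distance on the torus `𝕋¹ = [-π,π]` with endpoints identified. -/
noncomputable def vartheta (z : ℝ) : ℝ :=
  |z - 2 * π * ((round (z / (2 * π)) : ℤ) : ℝ)|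

/-- For a unit tangent field `τ`, the action of `A_τ = Id - (1/2π)∫ τ⊗τ`. -/
noncomputable def AmapUnit (τ : ℝ → EuclideanSpace ℝ (Fin 3))
    (v : EuclideanSpace ℝ (Fin 3)) : EuclideanSpace ℝ (Fin 3) :=
  v - (1 / (2 * π)) • ∫ x in (-π)..π, ((inner ℝ (τ x) v : ℝ)) • τ x

lemma vartheta_pi : vartheta π = π := by
  unfold vartheta
  have h2 : π / (2 * π) = 1/2 := by
    rw [mul_comm, div_mul_eq_div_div, div_self pi_ne_zero]
  rw [h2]
  norm_num [round_eq]
  rw [abs_of_nonpos (by linarith [pi_pos])]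
  ring

set_option maxHeartbeats 2000000 in
/-- Let `τ : 𝕋¹ → ℝ³` be a continuous unit tangent field with induced unit-speed curve
`γ` (so `γ' = τ`), and `A_τ = Id - (1/2π)∫ τ⊗τ`.  If `δ ≥ δ_∞(γ)` is any bound for the
distortion (i.e. `ϑ(x-y) ≤ δ|γ(x)-γ(y)|` for all `x,y`), then the minimal eigenvalue of
`A_τ` satisfies `λ_min(A_τ) ≥ δ^{-2}/2`, and consequently `‖A_τ^{-1}‖_op ≤ 2δ²`
(i.e. `‖w‖ ≤ 2δ²‖A_τ w‖` for all `w`). -/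
theorem stmt14 (τ γ : ℝ → EuclideanSpace ℝ (Fin 3))
    (hcont : Continuous τ)
    (hper : Function.Periodic τ (2 * π))
    (hperγ : Function.Periodic γ (2 * π))
    (hunit : ∀ z, ‖τ z‖ = 1)
    (hFTC : ∀ a b : ℝ, γ b - γ a = ∫ z in a..b, τ z) :
    ∀ δ : ℝ, 0 < δ →
      (∀ x y : ℝ, vartheta (x - y) ≤ δ * ‖γ x - γ y‖) →
      (∀ v : EuclideanSpace ℝ (Fin 3), ‖v‖ = 1 →
        (δ ^ 2)⁻¹ / 2 ≤ (inner ℝ v (AmapUnit τ v) : ℝ)) ∧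
      (∀ w : EuclideanSpace ℝ (Fin 3), ‖w‖ ≤ 2 * δ ^ 2 * ‖AmapUnit τ w‖) := by
  intro δ hδ hdist
  have hπ := pi_pos
  have hδ2 : (0:ℝ) < δ^2 := by positivity
  have hτint : ∀ a b : ℝ, IntervalIntegrable τ volume a b :=
    fun a b => hcont.intervalIntegrable a b
  -- continuity of γ
  have hγeq : ∀ b : ℝ, γ b = γ 0 + ∫ z in (0:ℝ)..b, τ z := by
    intro b
    have := hFTC 0 b
    rw [← this]; abel
  have hγcont : Continuous γ := by
    have h1 : Continuous fun b => γ 0 + ∫ z in (0:ℝ)..b, τ z :=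
      continuous_const.add (intervalIntegral.continuous_primitive hτint 0)
    exact h1.congr fun b => (hγeq b).symm
  -- Main eigenvalue bound
  have main : ∀ v : EuclideanSpace ℝ (Fin 3), ‖v‖ = 1 →
      (δ ^ 2)⁻¹ ≤ (inner ℝ v (AmapUnit τ v) : ℝ) := by
    intro v hv
    have c1 : Continuous fun x => (inner ℝ (τ x) v : ℝ) := hcont.inner continuous_const
    have csq : Continuous fun x => ((inner ℝ (τ x) v : ℝ))^2 := c1.pow 2
    have cone : Continuous fun x => 1 - ((inner ℝ (τ x) v : ℝ))^2 := continuous_const.sub csq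
    -- Borsuk-Ulam step
    set g : ℝ → ℝ := fun x => (inner ℝ (γ (x + π) - γ x) v : ℝ) with hg
    have hgcont : Continuous g :=
      Continuous.inner ((hγcont.comp (continuous_id.add continuous_const)).sub hγcont)
        continuous_const
    have hganti : g π = -g 0 := by
      have hγ2 : γ (π + π) = γ 0 := by
        rw [show π + π = 0 + 2*π by ring]; exact hperγ 0
      show (inner ℝ (γ (π + π) - γ π) v : ℝ) = -(inner ℝ (γ (0 + π) - γ 0) v : ℝ)
      rw [hγ2, zero_add, inner_sub_left, inner_sub_left]
      ring
    obtain ⟨x₀, -, hx₀⟩ : ∃ x₀ ∈ Set.uIcc (0:ℝ) π, g x₀ = 0 := by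
      have : (0:ℝ) ∈ Set.uIcc (g 0) (g π) := by
        rw [hganti, Set.mem_uIcc]
        rcases le_or_gt 0 (g 0) with h | h
        · right; constructor <;> linarith
        · left; constructor <;> linarith
      exact intermediate_value_uIcc hgcont.continuousOn this
    set d := γ (x₀ + π) - γ x₀ with hd
    have hdv : (inner ℝ d v : ℝ) = 0 := hx₀
    -- distortion bound
    have hdlow : π ≤ δ * ‖d‖ := by
      have := hdist (x₀ + π) x₀
      rwa [show x₀ + π - x₀ = π by ring, vartheta_pi] at this
    -- half interval lemma
    have key : ∀ a : ℝ, (inner ℝ (γ (a + π) - γ a) v : ℝ) = 0 →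
        ‖γ (a + π) - γ a‖^2 ≤ π * ∫ x in a..(a + π), (1 - (inner ℝ (τ x) v : ℝ)^2) := by
      intro a hev
      set e := γ (a + π) - γ a with he
      have heint : e = ∫ x in a..(a+π), τ x := hFTC a (a+π)
      have h1 : ‖e‖^2 = ∫ x in a..(a+π), (inner ℝ e (τ x) : ℝ) := by
        have h := (innerSL ℝ e).intervalIntegral_comp_comm (hτint a (a+π))
        simp only [innerSL_apply_apply] at h
        rw [h, ← heint, real_inner_self_eq_norm_sq]
      have hpt : ∀ x : ℝ, (inner ℝ e (τ x) : ℝ) ≤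
          π/2 * (1 - (inner ℝ (τ x) v : ℝ)^2) + ‖e‖^2/(2*π) := by
        intro x
        set P : EuclideanSpace ℝ (Fin 3) := τ x - (inner ℝ (τ x) v : ℝ) • v with hP
        have hPn : ‖P‖^2 = 1 - (inner ℝ (τ x) v : ℝ)^2 := by
          have hexp : (inner ℝ P P : ℝ) = 1 - (inner ℝ (τ x) v : ℝ)^2 := by
            simp only [hP, inner_sub_left, inner_sub_right, real_inner_smul_left,
              real_inner_smul_right]
            rw [real_inner_self_eq_norm_sq, real_inner_self_eq_norm_sq, hunit, hv,
              real_inner_comm v (τ x)]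
            ring
          rw [← real_inner_self_eq_norm_sq, hexp]
        have heP : (inner ℝ e (τ x) : ℝ) = inner ℝ e P := by
          rw [hP, inner_sub_right, real_inner_smul_right, hev]
          ring
        have hCS : (inner ℝ e P : ℝ) ≤ ‖e‖ * ‖P‖ := real_inner_le_norm e P
        have hAM : ‖e‖ * ‖P‖ ≤ π/2 * ‖P‖^2 + ‖e‖^2/(2*π) := by
          have key2 : 2*π*(‖e‖*‖P‖) ≤ 2*π*(π/2*‖P‖^2 + ‖e‖^2/(2*π)) := by
            have hrhs : 2*π*(π/2*‖P‖^2 + ‖e‖^2/(2*π)) = π^2*‖P‖^2 + ‖e‖^2 := by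
              field_simp
            rw [hrhs]
            nlinarith [sq_nonneg (π*‖P‖ - ‖e‖)]
          exact le_of_mul_le_mul_left key2 (by positivity)
        rw [heP, ← hPn]
        linarith
      have hint1 : IntervalIntegrable (fun x => (inner ℝ e (τ x) : ℝ)) volume a (a+π) :=
        (continuous_const.inner hcont).intervalIntegrable a (a+π)
      have hint2 : IntervalIntegrable
          (fun x => π/2 * (1 - (inner ℝ (τ x) v : ℝ)^2) + ‖e‖^2/(2*π)) volume a (a+π) :=
        ((continuous_const.mul cone).add continuous_const).intervalIntegrable a (a+π)
      have hmono := intervalIntegral.integral_mono (by linarith : a ≤ a + π) hint1 hint2 hpt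
      have hsplit : ∫ x in a..(a+π), (π/2 * (1 - (inner ℝ (τ x) v : ℝ)^2) + ‖e‖^2/(2*π)) =
          π/2 * (∫ x in a..(a+π), (1 - (inner ℝ (τ x) v : ℝ)^2)) + π * (‖e‖^2/(2*π)) := by
        rw [intervalIntegral.integral_add _ intervalIntegrable_const,
          intervalIntegral.integral_const_mul, intervalIntegral.integral_const]
        · simp only [add_sub_cancel_left, smul_eq_mul]
        · exact (continuous_const.mul cone).intervalIntegrable a (a+π)
      rw [hsplit] at hmono
      rw [← h1] at hmono
      have hconst : π * (‖e‖^2/(2*π)) = ‖e‖^2/2 := by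
        field_simp
      rw [hconst] at hmono
      linarith
    -- apply to both halves
    have h1 := key x₀ hdv
    rw [← hd] at h1
    have hshift : γ (x₀ + π + π) - γ (x₀ + π) = -d := by
      have hp : γ (x₀ + 2 * π) = γ x₀ := hperγ x₀
      rw [show x₀ + π + π = x₀ + 2*π by ring, hp, hd]
      abel
    have h2 : ‖d‖^2 ≤ π * ∫ x in (x₀+π)..(x₀+π+π), (1 - (inner ℝ (τ x) v : ℝ)^2) := by
      have hev2 : (inner ℝ (γ (x₀ + π + π) - γ (x₀ + π)) v : ℝ) = 0 := by
        rw [hshift, inner_neg_left, hdv, neg_zero]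
      have := key (x₀ + π) hev2
      rwa [hshift, norm_neg] at this
    have hIint : ∀ a b : ℝ, IntervalIntegrable
        (fun x => 1 - (inner ℝ (τ x) v : ℝ)^2) volume a b :=
      fun a b => cone.intervalIntegrable a b
    have hsum := intervalIntegral.integral_add_adjacent_intervals
      (hIint x₀ (x₀+π)) (hIint (x₀+π) (x₀+π+π))
    rw [show x₀ + π + π = x₀ + 2*π by ring] at hsum h2
    -- periodic shift
    have hperc : Function.Periodic (fun x => 1 - (inner ℝ (τ x) v : ℝ)^2) (2*π) := by
      intro x; simp [hper x]
    have hshift2 : ∫ x in (-π)..π, (1 - (inner ℝ (τ x) v : ℝ)^2) =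
        ∫ x in x₀..(x₀+2*π), (1 - (inner ℝ (τ x) v : ℝ)^2) := by
      have h := hperc.intervalIntegral_add_eq (-π) x₀
      rw [show -π + 2*π = π by ring] at h
      exact h
    have hdd : π^2 ≤ ‖d‖^2 * δ^2 := by
      have hmm := mul_le_mul hdlow hdlow hπ.le (by positivity)
      nlinarith
    have htot : 2*π^2 ≤ (π * ∫ x in (-π)..π, (1 - (inner ℝ (τ x) v : ℝ)^2)) * δ^2 := by
      rw [hshift2, ← hsum]
      have e1 := mul_le_mul_of_nonneg_right h1 hδ2.le
      have e2 := mul_le_mul_of_nonneg_right h2 hδ2.le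
      nlinarith
    -- compute inner ℝ v (AmapUnit τ v)
    have hAv : (inner ℝ v (AmapUnit τ v) : ℝ) =
        1 - (1/(2*π)) * ∫ x in (-π)..π, (inner ℝ (τ x) v : ℝ)^2 := by
      unfold AmapUnit
      rw [inner_sub_right, real_inner_smul_right, real_inner_self_eq_norm_sq, hv]
      have hint : IntervalIntegrable (fun x => ((inner ℝ (τ x) v : ℝ)) • τ x) volume (-π) π :=
        (((hcont.inner continuous_const : Continuous fun x => (inner ℝ (τ x) v : ℝ)).smul hcont :
          Continuous fun x => ((inner ℝ (τ x) v : ℝ)) • τ x)).intervalIntegrable _ _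
      have h := (innerSL ℝ v).intervalIntegral_comp_comm hint
      simp only [innerSL_apply_apply] at h
      rw [← h]
      have : (fun x => (inner ℝ v (((inner ℝ (τ x) v : ℝ)) • τ x) : ℝ)) =
          fun x => (inner ℝ (τ x) v : ℝ)^2 := by
        funext x
        rw [real_inner_smul_right, real_inner_comm v (τ x)]
        ring
      rw [this]
      ring
    have hone : ∫ x in (-π)..π, (1 - (inner ℝ (τ x) v : ℝ)^2) =
        2*π - ∫ x in (-π)..π, (inner ℝ (τ x) v : ℝ)^2 := by
      have hIc : IntervalIntegrable (fun x => (inner ℝ (τ x) v : ℝ)^2) volume (-π) π :=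
        csq.intervalIntegrable (-π) π
      rw [intervalIntegral.integral_sub intervalIntegrable_const hIc,
        intervalIntegral.integral_const, smul_eq_mul, mul_one, sub_neg_eq_add, two_mul]
    rw [hAv]
    set I := ∫ x in (-π)..π, (inner ℝ (τ x) v : ℝ)^2 with hI
    rw [hone] at htot
    have hgoal2 : 2*π ≤ (2*π - I)*δ^2 := by nlinarith [htot, hπ]
    have h2πpos : (0:ℝ) < 2*π := by positivity
    have hfrac : 1 - 1/(2*π)*I = (2*π - I)/(2*π) := by
      rw [sub_div, div_self h2πpos.ne']
      ring
    rw [hfrac, le_div_iff₀ h2πpos, show (δ^2)⁻¹ * (2*π) = 2*π/δ^2 by ring,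
      div_le_iff₀ hδ2]
    exact hgoal2
  constructor
  · intro v hv
    have h := main v hv
    have hpos : (0:ℝ) < (δ^2)⁻¹ := by positivity
    linarith
  · -- operator bound
    intro w
    have hlin : ∀ (c : ℝ) (u : EuclideanSpace ℝ (Fin 3)),
        AmapUnit τ (c • u) = c • AmapUnit τ u := by
      intro c u
      unfold AmapUnit
      have hi : ∫ x in (-π)..π, ((inner ℝ (τ x) (c • u) : ℝ)) • τ x =
          c • ∫ x in (-π)..π, ((inner ℝ (τ x) u : ℝ)) • τ x := by
        rw [← intervalIntegral.integral_smul]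
        congr 1
        funext x
        rw [real_inner_smul_right, mul_smul]
      rw [hi, smul_comm (1/(2*π)) c, ← smul_sub]
    rcases eq_or_ne w 0 with rfl | hw
    · have hz : AmapUnit τ (0 : EuclideanSpace ℝ (Fin 3)) = 0 := by
        have h := hlin 0 0
        simpa using h
      simp [hz]
    · have hwn : (0:ℝ) < ‖w‖ := norm_pos_iff.mpr hw
      have hvn : ‖(‖w‖⁻¹ • w : EuclideanSpace ℝ (Fin 3))‖ = 1 := by
        rw [norm_smul, norm_inv, norm_norm, inv_mul_cancel₀ hwn.ne']
      have h1 := main (‖w‖⁻¹ • w) hvn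
      have hAv : AmapUnit τ (‖w‖⁻¹ • w) = ‖w‖⁻¹ • AmapUnit τ w := hlin _ _
      have h2 : (inner ℝ (‖w‖⁻¹ • w : EuclideanSpace ℝ (Fin 3))
            (AmapUnit τ (‖w‖⁻¹ • w)) : ℝ) =
          ‖w‖⁻¹ * ‖w‖⁻¹ * inner ℝ w (AmapUnit τ w) := by
        rw [hAv, real_inner_smul_left, real_inner_smul_right]
        ring
      rw [h2] at h1
      have hCS : (inner ℝ w (AmapUnit τ w) : ℝ) ≤ ‖w‖ * ‖AmapUnit τ w‖ :=
        real_inner_le_norm _ _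
      have h3 : (δ^2)⁻¹ * (‖w‖ * ‖w‖) ≤ (inner ℝ w (AmapUnit τ w) : ℝ) := by
        calc (δ^2)⁻¹ * (‖w‖ * ‖w‖)
            ≤ (‖w‖⁻¹ * ‖w‖⁻¹ * inner ℝ w (AmapUnit τ w)) * (‖w‖ * ‖w‖) :=
              mul_le_mul_of_nonneg_right h1 (by positivity)
          _ = inner ℝ w (AmapUnit τ w) := by
              field_simp
      have h5 : (δ^2)⁻¹ * (‖w‖ * ‖w‖) ≤ ‖w‖ * ‖AmapUnit τ w‖ := le_trans h3 hCS
      have h6 : (δ^2)⁻¹ * ‖w‖ ≤ ‖AmapUnit τ w‖ := by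
        nlinarith
      have hinvδ : (δ^2)⁻¹ * δ^2 = 1 := inv_mul_cancel₀ hδ2.ne'
      nlinarith [norm_nonneg (AmapUnit τ w), mul_le_mul_of_nonneg_right h6 hδ2.le]
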